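/- Let (𝒳,d) be a compact metric space, ε > 0, D > 2, and S ⊂ 𝒳 a 2Dε-separated set (any two distinct points of S are at distance ≥ 2Dε). Let X, Y be 𝒳-valued random variables on a common probability space such that X is uniformly distributed over S and E(d(X,Y)) < ε. Then I(X;Y) ≥ (1 − 1/D)·log|S| − H(1/D), where H(p) is the binary entropy. -/

import Mathlib

open MeasureTheory Filter

noncomputable def miSum {Ω 𝒳 𝒴 : Type*} [MeasurableSpace Ω]
    (P : Measure Ω) (X : Ω → 𝒳) (Y : Ω → 𝒴) (Pp : Finset (Set 𝒳)) (Qq : Finset (Set 𝒴)) : ℝ :=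
  ∑ A ∈ Pp, ∑ B ∈ Qq,
    (P {ω | X ω ∈ A ∧ Y ω ∈ B}).toReal *
      Real.log ((P {ω | X ω ∈ A ∧ Y ω ∈ B}).toReal /
        ((P {ω | X ω ∈ A}).toReal * (P {ω | Y ω ∈ B}).toReal))

/-- A finite measurable partition of a measurable space, given as a finite
collection of measurable, pairwise disjoint sets covering the space. -/
def IsFinPartition {α : Type*} [MeasurableSpace α] (Pp : Finset (Set α)) : Prop :=
  (∀ A ∈ Pp, MeasurableSet A) ∧
  (∀ A ∈ Pp, ∀ B ∈ Pp, A ≠ B → Disjoint A B) ∧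
  (⋃ A ∈ Pp, A) = Set.univ

/-- The mutual information `I(X;Y)`: the supremum over all finite measurable
partitions `Pp` of `𝒳` and `Qq` of `𝒴` of
`∑_{P∈Pp,Q∈Qq} ℙ((X,Y)∈P×Q) log (ℙ((X,Y)∈P×Q) / (ℙ(X∈P)ℙ(Y∈Q)))`. -/
noncomputable def mutualInfo {Ω 𝒳 𝒴 : Type*} [MeasurableSpace Ω] [MeasurableSpace 𝒳]
    [MeasurableSpace 𝒴] (P : Measure Ω) (X : Ω → 𝒳) (Y : Ω → 𝒴) : ℝ :=
  ⨆ pq : {pq : Finset (Set 𝒳) × Finset (Set 𝒴) // IsFinPartition pq.1 ∧ IsFinPartition pq.2},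
    miSum P X Y pq.1.1 pq.1.2

/-- The binary entropy function `H(p) = -p log p - (1-p) log (1-p)`. -/
noncomputable def binEnt (p : ℝ) : ℝ := -(p * Real.log p) - (1 - p) * Real.log (1 - p)

lemma toReal_sum_measure {Ω ι : Type*} [MeasurableSpace Ω] (P : Measure Ω) [IsProbabilityMeasure P]
    (t : Finset ι) (f : ι → Set Ω) (hd : (↑t : Set ι).PairwiseDisjoint f)
    (hm : ∀ i ∈ t, MeasurableSet (f i)) :
    ∑ i ∈ t, (P (f i)).toReal = (P (⋃ i ∈ t, f i)).toReal := by
  rw [measure_biUnion_finset hd hm, ENNReal.toReal_sum fun i _ => measure_ne_top P (f i)]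

lemma gibbs_term {a b : ℝ} (ha : 0 ≤ a) (hb : 0 ≤ b) (hab : 0 < a → 0 < b) :
    a - b ≤ a * Real.log (a / b) := by
  rcases eq_or_lt_of_le ha with h | h
  · simp [← h]; linarith
  · have hb' := hab h
    have h1 : Real.log (b / a) ≤ b / a - 1 := Real.log_le_sub_one_of_pos (div_pos hb' h)
    have h2 : Real.log (a / b) = - Real.log (b / a) := by
      rw [← Real.log_inv, inv_div]
    nlinarith [mul_le_mul_of_nonneg_left h1 ha, mul_div_cancel₀ b h.ne']


lemma fano_sum {ι : Type*} [DecidableEq ι] (S : Finset ι) (a : ι → ι → ℝ) (p : ι → ℝ)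
    (n α e : ℝ) (hn : n = S.card) (hn2 : 2 ≤ n) (hα0 : 0 < α) (hα2 : α < 1/2)
    (ha0 : ∀ x ∈ S, ∀ z ∈ S, 0 ≤ a x z)
    (hap : ∀ x ∈ S, ∀ z ∈ S, a x z ≤ p z)
    (hp0 : ∀ z ∈ S, 0 ≤ p z)
    (hsum : ∑ x ∈ S, ∑ z ∈ S, a x z = 1)
    (hpsum : ∑ z ∈ S, p z = 1)
    (he : e = ∑ x ∈ S, ∑ z ∈ S.erase x, a x z)
    (heα : e ≤ α) :
    (1 - α) * Real.log n - binEnt α ≤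
      ∑ x ∈ S, ∑ z ∈ S, a x z * Real.log (a x z / (1/n * p z)) := by
  have hα1 : α < 1 := by linarith
  have hn0 : 0 < n := by linarith
  have hn1 : 0 < n - 1 := by linarith
  set q : ι → ι → ℝ := fun x z => if x = z then 1 - α else α / (n - 1) with hq
  have hq0 : ∀ x z, 0 < q x z := by
    intro x z; rw [hq]; dsimp only; split_ifs
    · linarith
    · positivity
  -- termwise Gibbs bound
  have hterm : ∀ x ∈ S, ∀ z ∈ S,
      (a x z - p z * q x z) + a x z * Real.log (q x z * n) ≤
        a x z * Real.log (a x z / (1/n * p z)) := by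
    intro x hx z hz
    rcases eq_or_lt_of_le (ha0 x hx z hz) with h | h
    · rw [← h]
      have := hp0 z hz
      have := (hq0 x z).le
      nlinarith
    · have hp : 0 < p z := lt_of_lt_of_le h (hap x hx z hz)
      have hqz := hq0 x z
      have hgibbs := gibbs_term h.le (mul_nonneg hp.le hqz.le) (fun _ => mul_pos hp hqz)
      have hlog : Real.log (a x z / (1/n * p z)) =
          Real.log (a x z / (p z * q x z)) + Real.log (q x z * n) := by
        rw [← Real.log_mul (ne_of_gt (div_pos h (mul_pos hp hqz))) (mul_pos hqz hn0).ne']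
        congr 1
        have := hqz.ne'
        field_simp
      rw [hlog, mul_add]
      linarith
  -- sum of p z * q x z over x and z is 1
  have hqsum : ∀ z ∈ S, ∑ x ∈ S, q x z = 1 := by
    intro z hz
    rw [← Finset.add_sum_erase S _ hz]
    have : ∀ x ∈ S.erase z, q x z = α / (n - 1) := by
      intro x hx
      rw [hq]; dsimp only
      rw [if_neg (Finset.mem_erase.1 hx).1]
    rw [Finset.sum_congr rfl this, Finset.sum_const, Finset.card_erase_of_mem hz]
    have hcast : ((S.card - 1 : ℕ) : ℝ) = n - 1 := by
      have h2 : 2 ≤ S.card := by exact_mod_cast hn ▸ hn2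
      push_cast [Nat.cast_sub (by omega : 1 ≤ S.card)]
      rw [hn]
    rw [nsmul_eq_mul, hcast, hq]; dsimp only
    rw [if_pos rfl]
    field_simp
    ring
  have hbq : ∑ x ∈ S, ∑ z ∈ S, p z * q x z = 1 := by
    rw [Finset.sum_comm]
    have : ∀ z ∈ S, ∑ x ∈ S, p z * q x z = p z := by
      intro z hz
      rw [← Finset.mul_sum, hqsum z hz, mul_one]
    rw [Finset.sum_congr rfl this, hpsum]
  -- diagonal sum
  have hdiag : ∑ x ∈ S, a x x = 1 - e := by
    have : ∀ x ∈ S, ∑ z ∈ S, a x z = a x x + ∑ z ∈ S.erase x, a x z := by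
      intro x hx
      rw [Finset.add_sum_erase S _ hx]
    rw [Finset.sum_congr rfl this, Finset.sum_add_distrib, ← he] at hsum
    linarith
  have he0 : 0 ≤ e := by
    rw [he]
    apply Finset.sum_nonneg
    intro x hx
    exact Finset.sum_nonneg fun z hz => ha0 x hx z (Finset.mem_of_mem_erase hz)
  -- compute the lower-bound sum
  have hsplit : ∑ x ∈ S, ∑ z ∈ S, a x z * Real.log (q x z * n) =
      (1 - e) * Real.log ((1 - α) * n) + e * Real.log (α / (n - 1) * n) := by
    have hx1 : ∀ x ∈ S, ∑ z ∈ S, a x z * Real.log (q x z * n) =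
        a x x * Real.log ((1 - α) * n) +
          (∑ z ∈ S.erase x, a x z) * Real.log (α / (n - 1) * n) := by
      intro x hx
      rw [← Finset.add_sum_erase S _ hx]
      congr 1
      · rw [hq]; dsimp only; rw [if_pos rfl]
      · rw [Finset.sum_mul]
        refine Finset.sum_congr rfl fun z hz => ?_
        rw [hq]; dsimp only
        rw [if_neg fun hxz => (Finset.mem_erase.1 hz).1 hxz.symm]
    rw [Finset.sum_congr rfl hx1, Finset.sum_add_distrib, ← Finset.sum_mul, ← Finset.sum_mul,
      hdiag, ← he]
  -- assemble
  have hmain : (1 - e) * Real.log ((1 - α) * n) + e * Real.log (α / (n - 1) * n) ≤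
      ∑ x ∈ S, ∑ z ∈ S, a x z * Real.log (a x z / (1/n * p z)) := by
    calc (1 - e) * Real.log ((1 - α) * n) + e * Real.log (α / (n - 1) * n)
        = (∑ x ∈ S, ∑ z ∈ S, a x z) - (∑ x ∈ S, ∑ z ∈ S, p z * q x z) +
          ∑ x ∈ S, ∑ z ∈ S, a x z * Real.log (q x z * n) := by
          rw [hsum, hbq, hsplit]; ring
      _ = ∑ x ∈ S, ∑ z ∈ S, ((a x z - p z * q x z) + a x z * Real.log (q x z * n)) := by
          simp [Finset.sum_add_distrib, Finset.sum_sub_distrib]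
      _ ≤ _ := by
          apply Finset.sum_le_sum
          intro x hx
          exact Finset.sum_le_sum fun z hz => hterm x hx z hz
  refine le_trans ?_ hmain
  -- final elementary inequality
  rw [Real.log_mul (by linarith : (1:ℝ) - α ≠ 0) hn0.ne',
    Real.log_mul (by positivity) hn0.ne', Real.log_div hα0.ne' hn1.ne']
  have hlogn : 0 ≤ Real.log n := Real.log_nonneg (by linarith)
  have hlogn1 : Real.log (n - 1) ≤ Real.log n := Real.log_le_log (by linarith) (by linarith)
  have hlogα : Real.log α ≤ Real.log (1 - α) := Real.log_le_log hα0 (by linarith)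
  rw [binEnt]
  nlinarith [mul_nonneg (sub_nonneg.2 heα) (add_nonneg (sub_nonneg.2 hlogα) hlogn),
    mul_nonneg he0 (sub_nonneg.2 hlogn1)]

lemma miSum_le_log {Ω 𝒳 𝒴 : Type*} [MeasurableSpace Ω] [MeasurableSpace 𝒳]
    [MeasurableSingletonClass 𝒳] [MeasurableSpace 𝒴]
    (P : Measure Ω) [IsProbabilityMeasure P] (X : Ω → 𝒳) (Y : Ω → 𝒴)
    (hX : Measurable X) (hY : Measurable Y) (S : Finset 𝒳) (hS : S.Nonempty) (hXS : ∀ ω, X ω ∈ S)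
    (hunif : ∀ x ∈ S, (P {ω | X ω = x}).toReal = 1 / S.card)
    (Pp : Finset (Set 𝒳)) (Qq : Finset (Set 𝒴)) (hPp : IsFinPartition Pp)
    (hQq : IsFinPartition Qq) :
    miSum P X Y Pp Qq ≤ Real.log S.card := by
  classical
  obtain ⟨hPm, hPd, hPu⟩ := hPp
  obtain ⟨hQm, hQd, hQu⟩ := hQq
  set n : ℝ := (S.card : ℝ) with hn
  have hn0 : 0 < n := by rw [hn]; exact_mod_cast Finset.card_pos.2 hS
  -- marginal of X on A
  have hmarg : ∀ A ∈ Pp, (P {ω | X ω ∈ A}).toReal = (S.filter (· ∈ A)).card / n := by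
    intro A hA
    have hset : {ω | X ω ∈ A} = ⋃ x ∈ S.filter (· ∈ A), {ω | X ω = x} := by
      ext ω
      simp only [Set.mem_setOf_eq, Set.mem_iUnion, Finset.mem_filter]
      constructor
      · intro h; exact ⟨X ω, ⟨hXS ω, h⟩, rfl⟩
      · rintro ⟨x, ⟨-, hx⟩, rfl⟩; exact hx
    rw [hset, ← toReal_sum_measure]
    · rw [Finset.sum_congr rfl fun x hx => hunif x (Finset.mem_filter.1 hx).1]
      simp [div_eq_mul_inv, Finset.sum_const, nsmul_eq_mul]
    · intro x hx y hy hxy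
      simp only [Function.onFun]
      apply Set.disjoint_left.2
      intro ω h1 h2
      exact hxy (h1.symm.trans h2)
    · intro x hx
      exact hX (measurableSet_singleton x)
  -- sum over B of joint = marginal of X
  have hrow : ∀ A ∈ Pp, ∑ B ∈ Qq, (P {ω | X ω ∈ A ∧ Y ω ∈ B}).toReal
      = (P {ω | X ω ∈ A}).toReal := by
    intro A hA
    rw [toReal_sum_measure P Qq (fun B => {ω | X ω ∈ A ∧ Y ω ∈ B})]
    · have huni : (⋃ B ∈ Qq, {ω | X ω ∈ A ∧ Y ω ∈ B}) = {ω | X ω ∈ A} := by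
        ext ω
        simp only [Set.mem_iUnion, Set.mem_setOf_eq]
        constructor
        · rintro ⟨B, hB, h, -⟩; exact h
        · intro h
          have : Y ω ∈ ⋃ B ∈ Qq, B := hQu ▸ Set.mem_univ _
          obtain ⟨B, hB, hYB⟩ := Set.mem_iUnion₂.1 this
          exact ⟨B, hB, h, hYB⟩
      rw [huni]
    · intro B hB B' hB' hBB'
      have := hQd B hB B' hB' hBB'
      apply Set.disjoint_left.2
      intro ω h1 h2
      exact Set.disjoint_left.1 this h1.2 h2.2
    · intro B hB
      have : {ω | X ω ∈ A ∧ Y ω ∈ B} = X ⁻¹' A ∩ Y ⁻¹' B := rfl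
      rw [this]
      exact (hX (hPm A hA)).inter (hY (hQm B hB))
  -- termwise bound
  have hterm : ∀ A ∈ Pp, ∀ B ∈ Qq,
      (P {ω | X ω ∈ A ∧ Y ω ∈ B}).toReal *
        Real.log ((P {ω | X ω ∈ A ∧ Y ω ∈ B}).toReal /
          ((P {ω | X ω ∈ A}).toReal * (P {ω | Y ω ∈ B}).toReal))
      ≤ (P {ω | X ω ∈ A ∧ Y ω ∈ B}).toReal * (- Real.log (P {ω | X ω ∈ A}).toReal) := by
    intro A hA B hB
    set j := (P {ω | X ω ∈ A ∧ Y ω ∈ B}).toReal with hj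
    set pA := (P {ω | X ω ∈ A}).toReal with hpA
    set pB := (P {ω | Y ω ∈ B}).toReal with hpB
    have hj0 : 0 ≤ j := ENNReal.toReal_nonneg
    rcases eq_or_lt_of_le hj0 with h | h
    · simp [← h]
    · have hjA : j ≤ pA := ENNReal.toReal_mono (measure_ne_top _ _)
        (measure_mono fun ω h => h.1)
      have hjB : j ≤ pB := ENNReal.toReal_mono (measure_ne_top _ _)
        (measure_mono fun ω h => h.2)
      have hpA0 : 0 < pA := lt_of_lt_of_le h hjA
      have hpB0 : 0 < pB := lt_of_lt_of_le h hjB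
      apply mul_le_mul_of_nonneg_left _ hj0
      rw [Real.log_div (ne_of_gt h) (by positivity), Real.log_mul hpA0.ne' hpB0.ne']
      have : Real.log j ≤ Real.log pB := Real.log_le_log h hjB
      linarith
  -- combine
  have hcount : ∑ A ∈ Pp, (S.filter (· ∈ A)).card = S.card := by
    rw [← Finset.card_biUnion]
    · congr 1
      ext x
      simp only [Finset.mem_biUnion, Finset.mem_filter]
      constructor
      · rintro ⟨A, -, hx, -⟩; exact hx
      · intro hx
        have : x ∈ ⋃ A ∈ Pp, A := hPu ▸ Set.mem_univ _
        obtain ⟨A, hA, hxA⟩ := Set.mem_iUnion₂.1 this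
        exact ⟨A, hA, hx, hxA⟩
    · intro A hA B hB hAB
      apply Finset.disjoint_left.2
      intro x h1 h2
      exact Set.disjoint_left.1 (hPd A hA B hB hAB)
        (Finset.mem_filter.1 h1).2 (Finset.mem_filter.1 h2).2
  calc miSum P X Y Pp Qq
      ≤ ∑ A ∈ Pp, ∑ B ∈ Qq, (P {ω | X ω ∈ A ∧ Y ω ∈ B}).toReal *
          (- Real.log (P {ω | X ω ∈ A}).toReal) := by
        apply Finset.sum_le_sum
        intro A hA
        exact Finset.sum_le_sum fun B hB => hterm A hA B hB
    _ = ∑ A ∈ Pp, (P {ω | X ω ∈ A}).toReal * (- Real.log (P {ω | X ω ∈ A}).toReal) := by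
        refine Finset.sum_congr rfl fun A hA => ?_
        rw [← Finset.sum_mul, hrow A hA]
    _ ≤ ∑ A ∈ Pp, ((S.filter (· ∈ A)).card / n) * Real.log n := by
        refine Finset.sum_le_sum fun A hA => ?_
        rw [hmarg A hA]
        rcases Nat.eq_zero_or_pos (S.filter (· ∈ A)).card with h | h
        · simp [h]
        · have hk1 : (1:ℝ) ≤ (S.filter (· ∈ A)).card := by exact_mod_cast h
          have hk0 : (0:ℝ) < (S.filter (· ∈ A)).card := by linarith
          apply mul_le_mul_of_nonneg_left _ (by positivity)
          rw [neg_le, ← Real.log_inv]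
          apply Real.log_le_log (by positivity)
          rw [inv_eq_one_div]
          gcongr
    _ = Real.log n := by
        rw [← Finset.sum_mul, ← Finset.sum_div]
        rw [show ∑ A ∈ Pp, ((S.filter (· ∈ A)).card : ℝ) = ((S.card : ℕ) : ℝ) by
          exact_mod_cast congrArg (Nat.cast : ℕ → ℝ) hcount]
        rw [div_self hn0.ne', one_mul]

/-- If `S` is a `2Dε`-separated set in a compact metric space, `X` is uniformly
distributed over `S` and `E(d(X,Y)) < ε`, then
`I(X;Y) ≥ (1 - 1/D) log |S| - H(1/D)`. -/
theorem mutualInfo_ge_of_separated {Ω 𝒳 : Type*} [MeasurableSpace Ω]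
    [MetricSpace 𝒳] [CompactSpace 𝒳] [MeasurableSpace 𝒳] [BorelSpace 𝒳]
    (P : Measure Ω) [IsProbabilityMeasure P] (ε D : ℝ) (hε : 0 < ε) (hD : 2 < D)
    (S : Finset 𝒳) (hS : S.Nonempty)
    (hsep : ∀ x ∈ S, ∀ y ∈ S, x ≠ y → 2 * D * ε ≤ dist x y)
    (X Y : Ω → 𝒳) (hX : Measurable X) (hY : Measurable Y)
    (hXS : ∀ ω, X ω ∈ S)
    (hunif : ∀ x ∈ S, (P {ω | X ω = x}).toReal = 1 / S.card)
    (hdist : ∫ ω, dist (X ω) (Y ω) ∂P < ε) :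
    (1 - 1 / D) * Real.log S.card - binEnt (1 / D) ≤ mutualInfo P X Y := by
  classical
  have hD0 : (0:ℝ) < D := by linarith
  set n : ℝ := (S.card : ℝ) with hn
  have hn1 : (1:ℝ) ≤ n := by
    rw [hn]; exact_mod_cast Nat.one_le_iff_ne_zero.2 (Finset.card_ne_zero_of_mem hS.choose_spec)
  set α : ℝ := 1 / D with hα
  have hα0 : 0 < α := by positivity
  have hα2 : α < 1/2 := by
    rw [hα, div_lt_div_iff₀ hD0 (by norm_num)]; linarith
  have hα1 : α < 1 := by linarith
  -- boundedness of the family defining mutualInfo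
  have hbdd : BddAbove (Set.range fun pq :
      {pq : Finset (Set 𝒳) × Finset (Set 𝒳) // IsFinPartition pq.1 ∧ IsFinPartition pq.2} =>
        miSum P X Y pq.1.1 pq.1.2) := by
    refine ⟨Real.log n, ?_⟩
    rintro v ⟨pq, rfl⟩
    exact miSum_le_log P X Y hX hY S hS hXS hunif pq.1.1 pq.1.2 pq.2.1 pq.2.2
  have hle : ∀ (Pp Qq : Finset (Set 𝒳)), IsFinPartition Pp → IsFinPartition Qq →
      miSum P X Y Pp Qq ≤ mutualInfo P X Y := by
    intro Pp Qq h1 h2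
    exact le_ciSup hbdd ⟨(Pp, Qq), h1, h2⟩
  rcases eq_or_lt_of_le hn1 with hcase | hcase
  · -- |S| = 1 : trivial case
    have hlog : Real.log n = 0 := by rw [← hcase, Real.log_one]
    have hBE : 0 ≤ binEnt α := by
      have h1 : Real.log α ≤ 0 := Real.log_nonpos hα0.le hα1.le
      have h2 : Real.log (1 - α) ≤ 0 := Real.log_nonpos (by linarith) (by linarith)
      rw [binEnt]
      nlinarith
    have htriv : IsFinPartition ({Set.univ} : Finset (Set 𝒳)) := by
      refine ⟨?_, ?_, ?_⟩
      · intro A hA; rw [Finset.mem_singleton] at hA; rw [hA]; exact MeasurableSet.univ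
      · intro A hA B hB hAB
        rw [Finset.mem_singleton] at hA hB
        exact absurd (hA.trans hB.symm) hAB
      · simp
    have h0 : miSum P X Y {Set.univ} {Set.univ} = 0 := by
      simp [miSum]
    have := hle {Set.univ} {Set.univ} htriv htriv
    rw [h0] at this
    rw [hlog]
    nlinarith
  · -- main case : |S| ≥ 2
    have hn2 : (2:ℝ) ≤ n := by
      rw [hn]; rw [hn] at hcase; exact_mod_cast hcase
    obtain ⟨s₀, hs₀⟩ := hS
    set r : ℝ := D * ε with hr
    have hr0 : 0 < r := by positivity
    set C : 𝒳 → Set 𝒳 := fun z =>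
      if z = s₀ then (⋃ x ∈ S.erase s₀, Metric.ball x r)ᶜ else Metric.ball z r with hC
    have hCm : ∀ z, MeasurableSet (C z) := by
      intro z; rw [hC]; dsimp only; split_ifs
      · exact (Finset.measurableSet_biUnion _ fun x _ => measurableSet_ball).compl
      · exact measurableSet_ball
    have hballs : ∀ x ∈ S, ∀ z ∈ S, x ≠ z →
        Disjoint (Metric.ball x r) (Metric.ball z r) := by
      intro x hx z hz hxz
      apply Metric.ball_disjoint_ball
      have := hsep x hx z hz hxz
      rw [hr]; linarith
    have hCself : ∀ z ∈ S, z ∈ C z := by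
      intro z hz
      rw [hC]; dsimp only
      split_ifs with h
      · subst h
        simp only [Set.mem_compl_iff, Set.mem_iUnion, not_exists]
        intro x hx hmem
        obtain ⟨hxne, hxS⟩ := Finset.mem_erase.1 hx
        rw [Metric.mem_ball] at hmem
        have := hsep z hz x hxS (fun h => hxne h.symm)
        have hcomm : dist z x = dist x z := dist_comm z x
        have hrε : 0 < D * ε := by positivity
        rw [hr] at hmem
        linarith
      · exact Metric.mem_ball_self hr0
    have hCd : ∀ z ∈ S, ∀ z' ∈ S, z ≠ z' → Disjoint (C z) (C z') := by
      have key : ∀ z' ∈ S, z' ≠ s₀ → Disjoint (C s₀) (C z') := by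
        intro z' hz' hne
        rw [hC]; dsimp only
        rw [if_pos rfl, if_neg hne]
        refine Disjoint.mono_right ?_ disjoint_compl_left
        intro y hy
        simp only [Set.mem_iUnion]
        exact ⟨z', Finset.mem_erase.2 ⟨hne, hz'⟩, hy⟩
      intro z hz z' hz' hne
      by_cases h1 : z = s₀
      · subst h1; exact key z' hz' (fun h => hne h.symm)
      · by_cases h2 : z' = s₀
        · subst h2; exact (key z hz h1).symm
        · rw [hC]; dsimp only; rw [if_neg h1, if_neg h2]
          exact hballs z hz z' hz' hne
    have hCu : (⋃ z ∈ S, C z) = Set.univ := by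
      ext y
      simp only [Set.mem_iUnion, Set.mem_univ, iff_true]
      by_cases hy : ∃ x ∈ S.erase s₀, y ∈ Metric.ball x r
      · obtain ⟨x, hx, hxy⟩ := hy
        obtain ⟨hxne, hxS⟩ := Finset.mem_erase.1 hx
        refine ⟨x, hxS, ?_⟩
        rw [hC]; dsimp only; rw [if_neg hxne]; exact hxy
      · refine ⟨s₀, hs₀, ?_⟩
        rw [hC]; dsimp only; rw [if_pos rfl]
        simp only [Set.mem_compl_iff, Set.mem_iUnion, not_exists]
        push_neg at hy
        exact fun x hx => hy x hx
    have hCinj : ∀ z ∈ S, ∀ z' ∈ S, C z = C z' → z = z' := by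
      intro z hz z' hz' hEq
      by_contra hne
      have hdisj := hCd z hz z' hz' hne
      rw [hEq] at hdisj
      exact Set.disjoint_left.1 hdisj (hCself z' hz') (hCself z' hz')
    have hfar : ∀ ω, ∀ z ∈ S, z ≠ X ω → Y ω ∈ C z → r ≤ dist (X ω) (Y ω) := by
      intro ω z hz hzX hYω
      rw [hC] at hYω; dsimp only at hYω
      by_cases h : z = s₀
      · rw [if_pos h] at hYω
        have hXne : X ω ≠ s₀ := fun hh => hzX (h.trans hh.symm)
        have hx : X ω ∈ S.erase s₀ := Finset.mem_erase.2 ⟨hXne, hXS ω⟩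
        simp only [Set.mem_compl_iff, Set.mem_iUnion, not_exists] at hYω
        have := hYω (X ω) hx
        rw [Metric.mem_ball] at this
        rw [dist_comm]
        linarith [not_lt.1 this]
      · rw [if_neg h] at hYω
        rw [Metric.mem_ball] at hYω
        have hsep' := hsep (X ω) (hXS ω) z hz (fun hh => hzX hh.symm)
        have htri := dist_triangle (X ω) (Y ω) z
        have hcomm : dist (Y ω) z = dist z (Y ω) := dist_comm _ _
        rw [hr]
        rw [hr] at hYω
        linarith
    -- abbreviations
    set a : 𝒳 → 𝒳 → ℝ := fun x z => (P {ω | X ω = x ∧ Y ω ∈ C z}).toReal with ha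
    set p : 𝒳 → ℝ := fun z => (P {ω | Y ω ∈ C z}).toReal with hp
    have hameas : ∀ x z, MeasurableSet {ω | X ω = x ∧ Y ω ∈ C z} := by
      intro x z
      have : {ω | X ω = x ∧ Y ω ∈ C z} = X ⁻¹' {x} ∩ Y ⁻¹' (C z) := by
        ext ω; simp [Set.mem_preimage]
      rw [this]
      exact (hX (measurableSet_singleton x)).inter (hY (hCm z))
    have hadisj : ∀ x ∈ S, ∀ z ∈ S, ∀ x' ∈ S, ∀ z' ∈ S, (x, z) ≠ (x', z') →
        Disjoint {ω | X ω = x ∧ Y ω ∈ C z} {ω | X ω = x' ∧ Y ω ∈ C z'} := by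
      intro x hx z hz x' hx' z' hz' hne
      apply Set.disjoint_left.2
      rintro ω ⟨h1, h2⟩ ⟨h3, h4⟩
      by_cases hxx : x = x'
      · have hzz : z ≠ z' := fun h => hne (by rw [hxx, h])
        exact Set.disjoint_left.1 (hCd z hz z' hz' hzz) h2 h4
      · exact hxx (h1.symm.trans h3)
    -- row sums : ∑_z a x z = P(X = x) = 1/n
    have hrowx : ∀ x ∈ S, ∑ z ∈ S, a x z = 1 / n := by
      intro x hx
      rw [ha]; dsimp only
      rw [toReal_sum_measure P S _
        (fun z hz z' hz' hne => hadisj x hx z hz x hx z' hz' (by simp [hne]))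
        (fun z _ => hameas x z)]
      have : (⋃ z ∈ S, {ω | X ω = x ∧ Y ω ∈ C z}) = {ω | X ω = x} := by
        ext ω
        simp only [Set.mem_iUnion, Set.mem_setOf_eq]
        constructor
        · rintro ⟨z, hz, h, -⟩; exact h
        · intro h
          have : Y ω ∈ ⋃ z ∈ S, C z := hCu ▸ Set.mem_univ _
          obtain ⟨z, hz, hYz⟩ := Set.mem_iUnion₂.1 this
          exact ⟨z, hz, h, hYz⟩
      rw [this, hunif x hx]
    have hsum : ∑ x ∈ S, ∑ z ∈ S, a x z = 1 := by
      have hn0 : n ≠ 0 := by linarith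
      rw [Finset.sum_congr rfl hrowx, Finset.sum_const, nsmul_eq_mul, ← hn]
      field_simp
    have hpsum : ∑ z ∈ S, p z = 1 := by
      rw [hp]; dsimp only
      rw [toReal_sum_measure P S (fun z => {ω | Y ω ∈ C z})
        (fun z hz z' hz' hne => by
          apply Set.disjoint_left.2
          intro ω h1 h2
          exact Set.disjoint_left.1 (hCd z hz z' hz' hne) h1 h2)
        (fun z _ => hY (hCm z))]
      have : (⋃ z ∈ S, {ω | Y ω ∈ C z}) = Set.univ := by
        ext ω
        simp only [Set.mem_iUnion, Set.mem_univ, iff_true, Set.mem_setOf_eq]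
        have : Y ω ∈ ⋃ z ∈ S, C z := hCu ▸ Set.mem_univ _
        exact Set.mem_iUnion₂.1 this
      rw [this, measure_univ, ENNReal.toReal_one]
    -- error probability bound via Markov
    have hεD : ε / r = α := by
      rw [hα, hr, mul_comm, ← div_div, div_self hε.ne']
    have hmarkov : (P {ω | r ≤ dist (X ω) (Y ω)}).toReal ≤ α := by
      have hint : Integrable (fun ω => dist (X ω) (Y ω)) P := by
        obtain ⟨Cb, hCb⟩ := Metric.isBounded_iff.1
          (Metric.isBounded_of_compactSpace (s := (Set.univ : Set 𝒳)))
        apply Integrable.mono' (integrable_const Cb) (hX.dist hY).aestronglyMeasurable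
        filter_upwards with ω
        rw [Real.norm_eq_abs, abs_of_nonneg dist_nonneg]
        exact hCb (Set.mem_univ _) (Set.mem_univ _)
      have := mul_meas_ge_le_integral_of_nonneg
        (Filter.Eventually.of_forall fun ω => dist_nonneg) hint r
      have h2 : (P {ω | r ≤ dist (X ω) (Y ω)}).toReal ≤ ε / r := by
        rw [le_div_iff₀ hr0]
        rw [measureReal_def] at this
        nlinarith [this, hdist]
      linarith [hεD ▸ h2]
    have heα : ∑ x ∈ S, ∑ z ∈ S.erase x, a x z ≤ α := by
      have hinner : ∀ x ∈ S, ∑ z ∈ S.erase x, a x z =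
          (P (⋃ z ∈ S.erase x, {ω | X ω = x ∧ Y ω ∈ C z})).toReal := by
        intro x hx
        rw [ha]; dsimp only
        exact toReal_sum_measure P _ _
          (fun z hz z' hz' hne => hadisj x hx z (Finset.mem_of_mem_erase hz) x hx
            z' (Finset.mem_of_mem_erase hz') (by simp [hne]))
          (fun z _ => hameas x z)
      rw [Finset.sum_congr rfl hinner,
        toReal_sum_measure P S _
          (fun x hx x' hx' hne => by
            apply Set.disjoint_left.2
            simp only [Set.mem_iUnion]
            rintro ω ⟨z, hz, h1, -⟩ ⟨z', hz', h2, -⟩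
            exact hne (h1.symm.trans h2))
          (fun x _ => Finset.measurableSet_biUnion _ fun z _ => hameas x z)]
      refine le_trans (ENNReal.toReal_mono (measure_ne_top _ _) (measure_mono ?_)) hmarkov
      simp only [Set.iUnion_subset_iff]
      intro x hx z hz ω hω
      simp only [Set.mem_setOf_eq] at hω ⊢
      obtain ⟨hz1, hz2⟩ := Finset.mem_erase.1 hz
      exact hω.1 ▸ hfar ω z hz2 (by rw [hω.1]; exact fun h => hz1 h) hω.2
    -- the partitions
    have hPp : IsFinPartition
        (S.image (fun x => ({x} : Set 𝒳)) ∪ {(↑S : Set 𝒳)ᶜ}) := by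
      refine ⟨?_, ?_, ?_⟩
      · intro A hA
        rcases Finset.mem_union.1 hA with h | h
        · obtain ⟨x, -, rfl⟩ := Finset.mem_image.1 h
          exact measurableSet_singleton x
        · rw [Finset.mem_singleton] at h
          rw [h]
          exact S.finite_toSet.measurableSet.compl
      · intro A hA B hB hAB
        rcases Finset.mem_union.1 hA with h1 | h1 <;> rcases Finset.mem_union.1 hB with h2 | h2
        · obtain ⟨x, hx, rfl⟩ := Finset.mem_image.1 h1
          obtain ⟨y, hy, rfl⟩ := Finset.mem_image.1 h2
          exact Set.disjoint_singleton.2 fun h => hAB (by rw [h])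
        · obtain ⟨x, hx, rfl⟩ := Finset.mem_image.1 h1
          rw [Finset.mem_singleton] at h2
          rw [h2]
          exact Set.disjoint_singleton_left.2 (by simpa using hx)
        · obtain ⟨x, hx, rfl⟩ := Finset.mem_image.1 h2
          rw [Finset.mem_singleton] at h1
          rw [h1]
          exact (Set.disjoint_singleton_left.2 (by simpa using hx)).symm
        · rw [Finset.mem_singleton] at h1 h2
          exact absurd (h1.trans h2.symm) hAB
      · ext y
        simp only [Set.mem_iUnion, Set.mem_univ, iff_true]
        by_cases hy : y ∈ S
        · exact ⟨{y}, Finset.mem_union_left _ (Finset.mem_image_of_mem _ hy), rfl⟩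
        · exact ⟨(↑S : Set 𝒳)ᶜ, Finset.mem_union_right _ (Finset.mem_singleton_self _),
            by simpa using hy⟩
    have hQq : IsFinPartition (S.image C) := by
      refine ⟨?_, ?_, ?_⟩
      · intro A hA
        obtain ⟨z, -, rfl⟩ := Finset.mem_image.1 hA
        exact hCm z
      · intro A hA B hB hAB
        obtain ⟨z, hz, rfl⟩ := Finset.mem_image.1 hA
        obtain ⟨z', hz', rfl⟩ := Finset.mem_image.1 hB
        exact hCd z hz z' hz' fun h => hAB (by rw [h])
      · ext y
        simp only [Set.mem_iUnion, Set.mem_univ, iff_true]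
        have : y ∈ ⋃ z ∈ S, C z := hCu ▸ Set.mem_univ _
        obtain ⟨z, hz, hyz⟩ := Set.mem_iUnion₂.1 this
        exact ⟨C z, Finset.mem_image_of_mem _ hz, hyz⟩
    -- reduce miSum on these partitions to the double sum
    have hsets1 : ∀ (x : 𝒳) (B : Set 𝒳), {ω | X ω ∈ ({x} : Set 𝒳) ∧ Y ω ∈ B}
        = {ω | X ω = x ∧ Y ω ∈ B} := by
      intro x B; ext ω; simp
    have hsets2 : ∀ x : 𝒳, {ω | X ω ∈ ({x} : Set 𝒳)} = {ω | X ω = x} := by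
      intro x; ext ω; simp
    have hred : miSum P X Y (S.image (fun x => ({x} : Set 𝒳)) ∪ {(↑S : Set 𝒳)ᶜ}) (S.image C)
        = ∑ x ∈ S, ∑ z ∈ S, a x z * Real.log (a x z / (1/n * p z)) := by
      have hc_not : (↑S : Set 𝒳)ᶜ ∉ S.image (fun x => ({x} : Set 𝒳)) := by
        simp only [Finset.mem_image, not_exists, not_and]
        intro x hx hxc
        have h1 : x ∈ ({x} : Set 𝒳) := rfl
        rw [hxc] at h1
        exact h1 (Finset.mem_coe.2 hx)
      unfold miSum
      rw [Finset.sum_union (Finset.disjoint_singleton_right.2 hc_not),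
        Finset.sum_singleton]
      have hzero : ∑ B ∈ S.image C,
          (P {ω | X ω ∈ (↑S : Set 𝒳)ᶜ ∧ Y ω ∈ B}).toReal *
            Real.log ((P {ω | X ω ∈ (↑S : Set 𝒳)ᶜ ∧ Y ω ∈ B}).toReal /
              ((P {ω | X ω ∈ (↑S : Set 𝒳)ᶜ}).toReal * (P {ω | Y ω ∈ B}).toReal)) = 0 := by
        refine Finset.sum_eq_zero fun B hB => ?_
        have : {ω | X ω ∈ (↑S : Set 𝒳)ᶜ ∧ Y ω ∈ B} = ∅ := by
          ext ω
          simp only [Set.mem_setOf_eq, Set.mem_empty_iff_false, iff_false, not_and,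
            Set.mem_compl_iff]
          intro h
          exact absurd (Finset.mem_coe.2 (hXS ω)) h
        rw [this]
        simp
      rw [hzero, add_zero,
        Finset.sum_image (fun x hx y hy h => Set.singleton_eq_singleton_iff.1 h)]
      refine Finset.sum_congr rfl fun x hx => ?_
      rw [Finset.sum_image (fun z hz z' hz' h => hCinj z hz z' hz' h)]
      refine Finset.sum_congr rfl fun z hz => ?_
      rw [hsets1, hsets2, hunif x hx, ha, hp]
    -- apply the core Fano computation
    have hcore := fano_sum S a p n α (∑ x ∈ S, ∑ z ∈ S.erase x, a x z) hn hn2 hα0 hα2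
      (fun x _ z _ => ENNReal.toReal_nonneg)
      (fun x hx z hz => ENNReal.toReal_mono (measure_ne_top _ _)
        (measure_mono fun ω h => h.2))
      (fun z _ => ENNReal.toReal_nonneg)
      hsum hpsum rfl heα
    calc (1 - α) * Real.log n - binEnt α
        ≤ ∑ x ∈ S, ∑ z ∈ S, a x z * Real.log (a x z / (1/n * p z)) := hcore
      _ = miSum P X Y (S.image (fun x => ({x} : Set 𝒳)) ∪ {(↑S : Set 𝒳)ᶜ}) (S.image C) :=
          hred.symm
      _ ≤ mutualInfo P X Y := hle _ _ hPp hQq
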